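/- Let d ≥ 2 and M ≥ 2, and let z_1,...,z_M be points of the open unit simplex in ℝ^d, at least two of which are distinct. Then the negative Dirichlet log-likelihood f(α) = M(∑_i log Γ(α_i) - log Γ(∑_i α_i)) - ∑_m ∑_i (α_i - 1) log z_{m,i}, defined on (0,∞)^d and extended by +∞ elsewhere, is coercive: f(α) → +∞ as ‖α‖ → ∞ with α ∈ (0,∞)^d. -/

import Mathlib

open Finset Filter

set_option maxHeartbeats 1000000


lemma my_exp_neg_one_le_Gamma {x : ℝ} (hx : 1 ≤ x) : Real.exp (-1) ≤ Real.Gamma x := by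
  have hx0 : (0:ℝ) < x := by linarith
  rw [Real.Gamma_eq_integral hx0]
  have hint : MeasureTheory.IntegrableOn (fun t : ℝ => Real.exp (-t) * t ^ (x - 1)) (Set.Ioi 0) :=
    Real.GammaIntegral_convergent hx0
  have hint1 : MeasureTheory.IntegrableOn (fun t : ℝ => Real.exp (-t) * t ^ (x - 1)) (Set.Ioi 1) :=
    hint.mono_set (Set.Ioi_subset_Ioi zero_le_one)
  have hexp1 : MeasureTheory.IntegrableOn (fun t : ℝ => Real.exp (-t)) (Set.Ioi 1) := by
    have := exp_neg_integrableOn_Ioi 1 (one_pos (α := ℝ))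
    simpa using this
  have h2 : (∫ t in Set.Ioi (1:ℝ), Real.exp (-t)) ≤
      ∫ t in Set.Ioi (1:ℝ), Real.exp (-t) * t ^ (x - 1) := by
    refine MeasureTheory.setIntegral_mono_on hexp1 hint1 measurableSet_Ioi ?_
    intro t ht
    have ht1 : (1:ℝ) ≤ t := le_of_lt ht
    have h3 : (1:ℝ) ≤ t ^ (x - 1) := by
      rw [Real.rpow_def_of_pos (by linarith)]
      exact Real.one_le_exp (mul_nonneg (Real.log_nonneg ht1) (by linarith))
    nlinarith [Real.exp_pos (-t)]
  have h4 : (∫ t in Set.Ioi (1:ℝ), Real.exp (-t) * t ^ (x - 1)) ≤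
      ∫ t in Set.Ioi (0:ℝ), Real.exp (-t) * t ^ (x - 1) := by
    refine MeasureTheory.setIntegral_mono_set hint ?_ ?_
    · filter_upwards [MeasureTheory.ae_restrict_mem measurableSet_Ioi] with t ht
      have : (0:ℝ) < t := ht
      positivity
    · exact HasSubset.Subset.eventuallyLE (Set.Ioi_subset_Ioi zero_le_one)
  calc Real.exp (-1) = ∫ t in Set.Ioi (1:ℝ), Real.exp (-t) := (integral_exp_neg_Ioi 1).symm
    _ ≤ _ := h2.trans h4

lemma my_neg_one_le_logGamma {x : ℝ} (hx : 1 ≤ x) : -1 ≤ Real.log (Real.Gamma x) := by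
  have h := my_exp_neg_one_le_Gamma hx
  calc (-1 : ℝ) = Real.log (Real.exp (-1)) := (Real.log_exp _).symm
    _ ≤ _ := Real.log_le_log (Real.exp_pos _) h

lemma my_logGamma_nonpos {x : ℝ} (h1 : 1 ≤ x) (h2 : x ≤ 2) :
    Real.log (Real.Gamma x) ≤ 0 := by
  have h := Real.convexOn_log_Gamma.2 (show (1:ℝ) ∈ Set.Ioi 0 by norm_num)
    (show (2:ℝ) ∈ Set.Ioi 0 by norm_num) (show (0:ℝ) ≤ 2 - x by linarith)
    (show (0:ℝ) ≤ x - 1 by linarith) (by ring)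
  simp only [smul_eq_mul, Function.comp_apply, Real.Gamma_one, Real.Gamma_two,
    Real.log_one] at h
  have hx : (2 - x) * 1 + (x - 1) * 2 = x := by ring
  rw [hx] at h
  linarith

lemma my_logGamma_rec {x : ℝ} (hx : 0 < x) :
    Real.log (Real.Gamma (x + 1)) = Real.log x + Real.log (Real.Gamma x) := by
  rw [Real.Gamma_add_one (ne_of_gt hx),
    Real.log_mul (ne_of_gt hx) (ne_of_gt (Real.Gamma_pos_of_pos hx))]

lemma my_logGamma_upper_aux : ∀ n : ℕ, ∀ x : ℝ, 1 ≤ x → x ≤ 2 + n →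
    Real.log (Real.Gamma x) ≤ x * Real.log x - x + 2 := by
  intro n
  induction n with
  | zero =>
    intro x h1 h2
    norm_num at h2
    have hx0 : (0:ℝ) < x := by linarith
    have hl := my_logGamma_nonpos h1 h2
    have h3 : Real.log x⁻¹ ≤ x⁻¹ - 1 := Real.log_le_sub_one_of_pos (by positivity)
    rw [Real.log_inv] at h3
    have hxx : x * x⁻¹ = 1 := mul_inv_cancel₀ (ne_of_gt hx0)
    nlinarith [mul_le_mul_of_nonneg_left h3 (le_of_lt hx0)]
  | succ n ih =>
    intro x h1 h2
    by_cases hc : x ≤ 2 + n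
    · exact ih x h1 hc
    push_neg at hc
    have hn0 : (0:ℝ) ≤ n := Nat.cast_nonneg n
    have hx2 : (2:ℝ) < x := by linarith
    have hy1 : 1 ≤ x - 1 := by linarith
    have hy2 : x - 1 ≤ 2 + n := by push_cast at h2; linarith
    have hrec := my_logGamma_rec (x := x - 1) (by linarith)
    rw [sub_add_cancel] at hrec
    have ihy := ih (x - 1) hy1 hy2
    have hkey : Real.log (x - 1) - Real.log x ≤ -x⁻¹ := by
      have h4 := Real.log_le_sub_one_of_pos (show (0:ℝ) < (x-1)/x by positivity)
      rw [Real.log_div (by linarith) (by linarith)] at h4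
      have : (x-1)/x = 1 - x⁻¹ := by field_simp
      rw [this] at h4
      linarith
    have hxx : x * x⁻¹ = 1 := mul_inv_cancel₀ (by linarith)
    nlinarith [mul_le_mul_of_nonneg_left hkey (by linarith : (0:ℝ) ≤ x)]

lemma my_logGamma_lower_aux : ∀ n : ℕ, ∀ x : ℝ, 1 ≤ x → x ≤ 2 + n →
    x * Real.log x - x - Real.log x - 1 ≤ Real.log (Real.Gamma x) := by
  intro n
  induction n with
  | zero =>
    intro x h1 h2
    norm_num at h2
    have hx0 : (0:ℝ) < x := by linarith
    have hl := my_neg_one_le_logGamma h1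
    nlinarith [Real.log_nonneg h1, Real.log_le_sub_one_of_pos hx0]
  | succ n ih =>
    intro x h1 h2
    by_cases hc : x ≤ 2 + n
    · exact ih x h1 hc
    push_neg at hc
    have hn0 : (0:ℝ) ≤ n := Nat.cast_nonneg n
    have hx2 : (2:ℝ) < x := by linarith
    have hy1 : 1 ≤ x - 1 := by linarith
    have hy2 : x - 1 ≤ 2 + n := by push_cast at h2; linarith
    have hrec := my_logGamma_rec (x := x - 1) (by linarith)
    rw [sub_add_cancel] at hrec
    have ihy := ih (x - 1) hy1 hy2
    have hkey : Real.log x - Real.log (x - 1) ≤ (x-1)⁻¹ := by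
      have h4 := Real.log_le_sub_one_of_pos (show (0:ℝ) < x/(x-1) by positivity)
      rw [Real.log_div (by linarith) (by linarith)] at h4
      have : x/(x-1) = 1 + (x-1)⁻¹ := by field_simp; ring
      rw [this] at h4
      linarith
    have hxx : (x-1) * (x-1)⁻¹ = 1 := mul_inv_cancel₀ (by linarith)
    nlinarith [mul_le_mul_of_nonneg_left hkey (by linarith : (0:ℝ) ≤ x - 1)]

lemma my_logGamma_upper {x : ℝ} (hx : 1 ≤ x) :
    Real.log (Real.Gamma x) ≤ x * Real.log x - x + 2 := by
  obtain ⟨n, hn⟩ := exists_nat_ge x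
  exact my_logGamma_upper_aux n x hx (by linarith)

lemma my_logGamma_lower {x : ℝ} (hx : 0 < x) :
    x * Real.log x - x - Real.log (max x 1) - 1 ≤ Real.log (Real.Gamma x) := by
  rcases le_or_gt 1 x with h | h
  · rw [max_eq_left h]
    obtain ⟨n, hn⟩ := exists_nat_ge x
    exact my_logGamma_lower_aux n x h (by linarith)
  · rw [max_eq_right h.le, Real.log_one]
    have hrec := my_logGamma_rec hx
    have h1 : -1 ≤ Real.log (Real.Gamma (x + 1)) := my_neg_one_le_logGamma (by linarith)
    have hlx : Real.log x < 0 := Real.log_neg hx h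
    have haux : x * Real.log x ≤ 0 := mul_nonpos_of_nonneg_of_nonpos hx.le hlx.le
    linarith

lemma my_gibbs {ι : Type*} (t : Finset ι) (q p : ι → ℝ) (hq : ∀ i ∈ t, 0 < q i)
    (hp : ∀ i ∈ t, 0 < p i) (hq1 : ∑ i ∈ t, q i = 1) (hp1 : ∑ i ∈ t, p i = 1) :
    0 ≤ ∑ i ∈ t, q i * (Real.log (q i) - Real.log (p i)) := by
  have h : ∀ i ∈ t, q i - p i ≤ q i * (Real.log (q i) - Real.log (p i)) := by
    intro i hi
    have hqi := hq i hi
    have hpi := hp i hi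
    have h1 : Real.log (p i / q i) ≤ p i / q i - 1 :=
      Real.log_le_sub_one_of_pos (by positivity)
    rw [Real.log_div (ne_of_gt hpi) (ne_of_gt hqi)] at h1
    have h2 := mul_le_mul_of_nonneg_left h1 hqi.le
    have h3 : q i * (p i / q i - 1) = p i - q i := by field_simp
    rw [h3] at h2
    nlinarith
  calc (0:ℝ) = ∑ i ∈ t, (q i - p i) := by rw [Finset.sum_sub_distrib, hq1, hp1]; ring
    _ ≤ _ := Finset.sum_le_sum h


/-- Coercivity of the negative Dirichlet log-likelihood: if at least two of the
simplex samples are distinct, then `f(α) → +∞` as `‖α‖ → ∞` within `(0,∞)^d`. -/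
theorem dirichlet_nll_coercive (d M : ℕ) (hd : 2 ≤ d) (hM : 2 ≤ M)
    (z : Fin M → Fin d → ℝ)
    (hpos : ∀ m i, 0 < z m i) (hsum : ∀ m, ∑ i, z m i = 1)
    (hdistinct : ∃ m m', z m ≠ z m') :
    Tendsto
      (fun α : Fin d → ℝ =>
        (M : ℝ) * (∑ i, Real.log (Real.Gamma (α i))
            - Real.log (Real.Gamma (∑ i, α i)))
          - ∑ m, ∑ i, (α i - 1) * Real.log (z m i))
      ((Filter.comap (fun α : Fin d → ℝ => ‖α‖) atTop) ⊓
        Filter.principal {α : Fin d → ℝ | ∀ i, 0 < α i})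
      atTop := by
  have hM0 : (0:ℝ) < M := by positivity
  have hMne : (M:ℝ) ≠ 0 := ne_of_gt hM0
  haveI : NeZero d := ⟨by omega⟩
  haveI : NeZero M := ⟨by omega⟩
  -- the geometric-mean weights
  set lam : Fin d → ℝ := fun i => (∑ m, Real.log (z m i)) / M with hlam
  set G : ℝ := ∑ i, Real.exp (lam i) with hGdef
  have hG0 : 0 < G := Finset.sum_pos (fun i _ => Real.exp_pos _) univ_nonempty
  -- Jensen: exp (lam i) ≤ average of z · i, strictly at some coordinate
  have hjen : ∀ i, Real.exp (lam i) ≤ (∑ m, z m i) / M := by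
    intro i
    have h := (strictConcaveOn_log_Ioi.concaveOn).le_map_sum
      (t := (univ : Finset (Fin M))) (w := fun _ => (M:ℝ)⁻¹) (p := fun m => z m i)
      (fun _ _ => by positivity)
      (by simp [Finset.card_univ])
      (fun m _ => hpos m i)
    simp only [smul_eq_mul] at h
    have h1 : lam i = ∑ m, (M:ℝ)⁻¹ * Real.log (z m i) := by
      simp only [hlam, div_eq_inv_mul, Finset.mul_sum]
    have h2 : (∑ m, z m i) / M = ∑ m, (M:ℝ)⁻¹ * z m i := by
      rw [div_eq_inv_mul, Finset.mul_sum]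
    rw [h1, h2]
    calc Real.exp (∑ m, (M:ℝ)⁻¹ * Real.log (z m i))
        ≤ Real.exp (Real.log (∑ m, (M:ℝ)⁻¹ * z m i)) := Real.exp_le_exp.mpr h
      _ = ∑ m, (M:ℝ)⁻¹ * z m i := Real.exp_log (by
          refine Finset.sum_pos (fun m _ => mul_pos (by positivity) (hpos m _)) univ_nonempty)
  obtain ⟨m0, m1, hzne⟩ := hdistinct
  obtain ⟨i0, hi0⟩ := Function.ne_iff.mp hzne
  have hjenstrict : Real.exp (lam i0) < (∑ m, z m i0) / M := by
    have h := strictConcaveOn_log_Ioi.lt_map_sum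
      (t := (univ : Finset (Fin M))) (w := fun _ => (M:ℝ)⁻¹) (p := fun m => z m i0)
      (fun _ _ => by positivity)
      (by simp [Finset.card_univ])
      (fun m _ => hpos m i0)
      ⟨m0, mem_univ _, m1, mem_univ _, hi0⟩
    simp only [smul_eq_mul] at h
    have h1 : lam i0 = ∑ m, (M:ℝ)⁻¹ * Real.log (z m i0) := by
      simp only [hlam, div_eq_inv_mul, Finset.mul_sum]
    have h2 : (∑ m, z m i0) / M = ∑ m, (M:ℝ)⁻¹ * z m i0 := by
      rw [div_eq_inv_mul, Finset.mul_sum]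
    rw [h1, h2]
    calc Real.exp (∑ m, (M:ℝ)⁻¹ * Real.log (z m i0))
        < Real.exp (Real.log (∑ m, (M:ℝ)⁻¹ * z m i0)) := Real.exp_lt_exp.mpr h
      _ = ∑ m, (M:ℝ)⁻¹ * z m i0 := Real.exp_log (by
          refine Finset.sum_pos (fun m _ => mul_pos (by positivity) (hpos m _)) univ_nonempty)
  have hG1 : G < 1 := by
    have h := Finset.sum_lt_sum (f := fun i => Real.exp (lam i))
      (g := fun i => (∑ m, z m i) / M)
      (fun i _ => hjen i) ⟨i0, mem_univ _, hjenstrict⟩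
    have h2 : ∑ i, (∑ m, z m i) / M = 1 := by
      rw [← Finset.sum_div, Finset.sum_comm]
      simp only [hsum]
      simp [Finset.card_univ]
    rw [hGdef]
    calc ∑ i, Real.exp (lam i) < ∑ i, (∑ m, z m i) / M := h
      _ = 1 := h2
  set c0 : ℝ := -Real.log G with hc0def
  have hc0 : 0 < c0 := by
    rw [hc0def]
    simpa using Real.log_neg hG0 hG1
  set L : ℝ := ∑ i, lam i with hLdef
  -- pointwise lower bound
  have key : ∀ α : Fin d → ℝ, (∀ i, 0 < α i) → 1 ≤ ∑ i, α i →
      c0 * (∑ i, α i) - d * Real.log (∑ i, α i) - ((d:ℝ) + 2 - L) ≤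
      (∑ i, Real.log (Real.Gamma (α i)) - Real.log (Real.Gamma (∑ i, α i)))
        - ∑ i, (α i - 1) * lam i := by
    intro α hα hs1
    set s : ℝ := ∑ i, α i with hsdef
    have hs0 : (0:ℝ) < s := lt_of_lt_of_le one_pos hs1
    have hαs : ∀ i, α i ≤ s := fun i =>
      Finset.single_le_sum (fun j _ => (hα j).le) (mem_univ i)
    have h1 : ∀ i, α i * Real.log (α i) - α i - Real.log s - 1 ≤
        Real.log (Real.Gamma (α i)) := by
      intro i
      have hlo := my_logGamma_lower (hα i)
      have hmle : Real.log (max (α i) 1) ≤ Real.log s :=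
        Real.log_le_log (by positivity) (max_le (hαs i) hs1)
      linarith
    have h1s : ∑ i, (α i * Real.log (α i)) - s - (d:ℝ) * Real.log s - d ≤
        ∑ i, Real.log (Real.Gamma (α i)) := by
      have := Finset.sum_le_sum (fun i (_ : i ∈ univ) => h1 i)
      have hexp : ∑ i, (α i * Real.log (α i) - α i - Real.log s - 1)
          = ∑ i, (α i * Real.log (α i)) - s - (d:ℝ) * Real.log s - d := by
        simp only [Finset.sum_sub_distrib, Finset.sum_const, Finset.card_univ,
          Fintype.card_fin, nsmul_eq_mul, mul_one, ← hsdef]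
      linarith [hexp ▸ this]
    have h2 : Real.log (Real.Gamma s) ≤ s * Real.log s - s + 2 := my_logGamma_upper hs1
    -- Gibbs inequality
    have h4 : 0 ≤ ∑ i, (α i / s) * (Real.log (α i / s) - Real.log (Real.exp (lam i) / G)) := by
      refine my_gibbs univ _ _ (fun i _ => div_pos (hα i) hs0)
        (fun i _ => div_pos (Real.exp_pos _) hG0) ?_ ?_
      · rw [← Finset.sum_div, ← hsdef, div_self (ne_of_gt hs0)]
      · rw [← Finset.sum_div, ← hGdef, div_self (ne_of_gt hG0)]
    have hterm : ∀ i : Fin d, (α i / s) * (Real.log (α i / s) - Real.log (Real.exp (lam i) / G))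
        = (α i * (Real.log (α i) - Real.log s - lam i) + α i * Real.log G) / s := by
      intro i
      rw [Real.log_div (ne_of_gt (hα i)) (ne_of_gt hs0),
        Real.log_div (ne_of_gt (Real.exp_pos _)) (ne_of_gt hG0), Real.log_exp]
      field_simp
      ring
    rw [Finset.sum_congr rfl (fun i _ => hterm i), ← Finset.sum_div,
      Finset.sum_add_distrib, ← Finset.sum_mul, ← hsdef] at h4
    have h4' : 0 ≤ ∑ i, α i * (Real.log (α i) - Real.log s - lam i) + s * Real.log G := by
      have := mul_le_mul_of_nonneg_left h4 hs0.le
      rw [mul_zero, mul_div_cancel₀ _ (ne_of_gt hs0)] at this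
      linarith
    have hTexp : ∑ i, α i * (Real.log (α i) - Real.log s - lam i)
        = ∑ i, (α i * Real.log (α i)) - s * Real.log s - ∑ i, (α i * lam i) := by
      simp only [mul_sub, Finset.sum_sub_distrib, ← Finset.sum_mul, ← hsdef]
    have hlin : ∑ i, (α i - 1) * lam i = ∑ i, (α i * lam i) - L := by
      simp only [sub_mul, one_mul, Finset.sum_sub_distrib, hLdef]
    rw [hTexp] at h4'
    rw [hlin]
    have hc0s : c0 * s = -(s * Real.log G) := by rw [hc0def]; ring
    linarith
  -- rewrite the data term
  have hdata : ∀ α : Fin d → ℝ,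
      ∑ m, ∑ i, (α i - 1) * Real.log (z m i) = M * ∑ i, (α i - 1) * lam i := by
    intro α
    rw [Finset.sum_comm, Finset.mul_sum]
    refine Finset.sum_congr rfl fun i _ => ?_
    rw [← Finset.mul_sum]
    simp only [hlam]
    field_simp
  set F := (Filter.comap (fun α : Fin d → ℝ => ‖α‖) atTop) ⊓
      Filter.principal {α : Fin d → ℝ | ∀ i, 0 < α i} with hF
  have hposF : ∀ᶠ α in F, ∀ i, 0 < α i :=
    Filter.le_principal_iff.mp inf_le_right
  have hnorm : Tendsto (fun α : Fin d → ℝ => ‖α‖) F atTop :=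
    tendsto_comap.mono_left inf_le_left
  have hsF : Tendsto (fun α : Fin d → ℝ => ∑ i, α i) F atTop := by
    refine tendsto_atTop_mono' F ?_ hnorm
    filter_upwards [hposF] with α hα
    refine (pi_norm_le_iff_of_nonneg (Finset.sum_nonneg fun i _ => (hα i).le)).mpr fun i => ?_
    rw [Real.norm_eq_abs, abs_of_pos (hα i)]
    exact Finset.single_le_sum (fun j _ => (hα j).le) (mem_univ i)
  have hψ : Tendsto
      (fun t : ℝ => (M:ℝ) * (c0 * t - d * Real.log t - ((d:ℝ) + 2 - L))) atTop atTop := by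
    refine Tendsto.const_mul_atTop hM0 ?_
    have hε : (0:ℝ) < c0 / (2 * ((d:ℝ) + 1)) := by positivity
    have hev := Real.isLittleO_log_id_atTop.def hε
    refine tendsto_atTop_mono' atTop (f₁ := fun t : ℝ => c0 / 2 * t - ((d:ℝ) + 2 - L)) ?_ ?_
    · filter_upwards [hev, eventually_ge_atTop (1:ℝ)] with t ht ht1
      rw [Real.norm_eq_abs, id_eq, Real.norm_eq_abs] at ht
      have h6 : Real.log t ≤ c0 / (2 * ((d:ℝ) + 1)) * t := by
        calc Real.log t ≤ |Real.log t| := le_abs_self _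
          _ ≤ c0 / (2 * ((d:ℝ) + 1)) * |t| := ht
          _ = c0 / (2 * ((d:ℝ) + 1)) * t := by rw [abs_of_pos (by linarith)]
      have hde : (d:ℝ) * (c0 / (2 * ((d:ℝ) + 1))) ≤ c0 / 2 := by
        rw [mul_div_assoc', div_le_div_iff₀ (by positivity) (by norm_num)]
        have hd0 : (0:ℝ) ≤ (d:ℝ) := Nat.cast_nonneg d
        nlinarith
      have h7 : (d:ℝ) * Real.log t ≤ c0 / 2 * t := by
        calc (d:ℝ) * Real.log t ≤ (d:ℝ) * (c0 / (2 * ((d:ℝ) + 1)) * t) :=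
              mul_le_mul_of_nonneg_left h6 (Nat.cast_nonneg d)
          _ = ((d:ℝ) * (c0 / (2 * ((d:ℝ) + 1)))) * t := by ring
          _ ≤ c0 / 2 * t := mul_le_mul_of_nonneg_right hde (by linarith)
      show c0 / 2 * t - ((d:ℝ) + 2 - L) ≤ c0 * t - d * Real.log t - ((d:ℝ) + 2 - L)
      linarith
    · have h8 : Tendsto (fun t : ℝ => c0 / 2 * t) atTop atTop :=
        tendsto_id.const_mul_atTop (by positivity)
      exact tendsto_atTop_add_const_right atTop (-((d:ℝ) + 2 - L)) h8 |>.congr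
        (fun t => by ring)
  refine tendsto_atTop_mono' F ?_ (hψ.comp hsF)
  filter_upwards [hposF, hsF.eventually_ge_atTop 1] with α h1 h2
  have hkey := key α h1 h2
  have hmul := mul_le_mul_of_nonneg_left hkey hM0.le
  simp only [Function.comp_apply]
  rw [hdata α]
  calc (M:ℝ) * (c0 * (∑ i, α i) - d * Real.log (∑ i, α i) - ((d:ℝ) + 2 - L))
      ≤ (M:ℝ) * ((∑ i, Real.log (Real.Gamma (α i)) - Real.log (Real.Gamma (∑ i, α i)))
          - ∑ i, (α i - 1) * lam i) := hmul
    _ = (M:ℝ) * (∑ i, Real.log (Real.Gamma (α i)) - Real.log (Real.Gamma (∑ i, α i)))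
          - (M:ℝ) * ∑ i, (α i - 1) * lam i := by ring
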